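/- Let U = B_s A_s ⋯ B_1 A_1 be a product of unitaries on a finite-dimensional Hilbert space H, and suppose ξ ∈ H is a unit vector with B_i ξ = ξ for all i = 1,…,s. Then for any α, β ∈ ℂ, applying the operator ∏_{i=s}^{1} (|0⟩⟨0| ⊗ B_i + |1⟩⟨1| ⊗ B_i A_i) (product taken with B_sA_s-factor leftmost) to (α|0⟩ + β|1⟩) ⊗ ξ yields α|0⟩ ⊗ ξ + β|1⟩ ⊗ (U ξ). In particular this equals the action of the controlled unitary |0⟩⟨0| ⊗ I + |1⟩⟨1| ⊗ U on that state. -/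

import Mathlib

open Matrix Kronecker

noncomputable section

/-- Projector `|b⟩⟨b|` on one qubit. -/
def proj (b : Fin 2) : Matrix (Fin 2) (Fin 2) ℂ :=
  fun i j => if i = b ∧ j = b then 1 else 0


lemma blockAct {ι : Type*} [Fintype ι] (X Y : Matrix ι ι ℂ) (u v : ι → ℂ) :
    (proj 0 ⊗ₖ X + proj 1 ⊗ₖ Y).mulVec (fun p : Fin 2 × ι => ![u p.2, v p.2] p.1)
    = fun p : Fin 2 × ι => ![X.mulVec u p.2, Y.mulVec v p.2] p.1 := by
  funext ⟨i, a⟩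
  fin_cases i <;>
    simp [Matrix.mulVec, dotProduct, proj, kroneckerMap_apply,
      Fintype.sum_prod_type, Fin.sum_univ_two]

lemma key {ι : Type*} [Fintype ι] [DecidableEq ι] (L : List (Matrix ι ι ℂ × Matrix ι ι ℂ))
    (ξ : ι → ℂ) (hfix : ∀ p ∈ L, p.1.mulVec ξ = ξ) (α : ℂ) (v : ι → ℂ) :
    ((L.map fun p : Matrix ι ι ℂ × Matrix ι ι ℂ => proj 0 ⊗ₖ p.1 + proj 1 ⊗ₖ (p.1 * p.2)).reverse.prod).mulVec
      (fun q : Fin 2 × ι => ![α * ξ q.2, v q.2] q.1)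
    = fun q : Fin 2 × ι =>
        ![α * ξ q.2, ((L.map fun p : Matrix ι ι ℂ × Matrix ι ι ℂ => p.1 * p.2).reverse.prod).mulVec v q.2] q.1 := by
  induction L generalizing v with
  | nil => simp [Matrix.mulVec_one]
  | cons p L ih =>
      simp only [List.map_cons, List.reverse_cons, List.prod_append, List.prod_cons,
        List.prod_nil, mul_one]
      rw [← Matrix.mulVec_mulVec, blockAct p.1 (p.1 * p.2) (fun b => α * ξ b) v]
      have hu : p.1.mulVec (fun b => α * ξ b) = fun b => α * ξ b := by
        have : (fun b => α * ξ b) = α • ξ := by funext b; simp [Pi.smul_apply, smul_eq_mul]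
        rw [this, Matrix.mulVec_smul, hfix p (by simp)]
      rw [hu, ih (fun q hq => hfix q (List.mem_cons_of_mem _ hq))]
      simp [Matrix.mulVec_mulVec]


/-- applying `∏_{i=s}^{1} (|0⟩⟨0| ⊗ B_i + |1⟩⟨1| ⊗ B_i A_i)` to
`(α|0⟩ + β|1⟩) ⊗ ξ` yields `α|0⟩ ⊗ ξ + β|1⟩ ⊗ (U ξ)`, which equals the action of the
controlled unitary `|0⟩⟨0| ⊗ I + |1⟩⟨1| ⊗ U`, where `U = B_s A_s ⋯ B_1 A_1` and
`ξ` is a common unit eigenvector of the `B_i` with eigenvalue 1. -/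
theorem stmt0 {ι : Type*} [Fintype ι] [DecidableEq ι] (s : ℕ)
    (A B : Fin s → Matrix ι ι ℂ)
    (hA : ∀ i, A i ∈ Matrix.unitaryGroup ι ℂ)
    (hB : ∀ i, B i ∈ Matrix.unitaryGroup ι ℂ)
    (ξ : ι → ℂ) (hξ : ∑ i, ‖ξ i‖ ^ 2 = 1)
    (hfix : ∀ i, (B i).mulVec ξ = ξ)
    (α β : ℂ) :
    ((List.ofFn fun i : Fin s =>
        proj 0 ⊗ₖ B i + proj 1 ⊗ₖ (B i * A i)).reverse.prod).mulVec
      (fun p : Fin 2 × ι => ![α, β] p.1 * ξ p.2)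
    = (fun p : Fin 2 × ι =>
        ![α * ξ p.2,
          β * ((List.ofFn fun i : Fin s => B i * A i).reverse.prod).mulVec ξ p.2] p.1)
    ∧
    ((proj 0 ⊗ₖ (1 : Matrix ι ι ℂ) +
        proj 1 ⊗ₖ (List.ofFn fun i : Fin s => B i * A i).reverse.prod).mulVec
      (fun p : Fin 2 × ι => ![α, β] p.1 * ξ p.2))
    = (fun p : Fin 2 × ι =>
        ![α * ξ p.2,
          β * ((List.ofFn fun i : Fin s => B i * A i).reverse.prod).mulVec ξ p.2] p.1) := by
  set U : Matrix ι ι ℂ := (List.ofFn fun i : Fin s => B i * A i).reverse.prod with hU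
  have hvec : (fun p : Fin 2 × ι => ![α, β] p.1 * ξ p.2)
      = fun q : Fin 2 × ι => ![α * ξ q.2, β * ξ q.2] q.1 := by
    funext ⟨i, a⟩; fin_cases i <;> rfl
  have hsm : ∀ M : Matrix ι ι ℂ, M.mulVec (fun b => β * ξ b) = fun b => β * M.mulVec ξ b := by
    intro M
    have h1 : (fun b => β * ξ b) = β • ξ := by funext b; rfl
    rw [h1, Matrix.mulVec_smul]; rfl
  constructor
  · have hk := key (List.ofFn fun i : Fin s => (B i, A i)) ξ
      (by
        intro p hp
        obtain ⟨i, rfl⟩ := List.mem_ofFn.mp hp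
        exact hfix i) α (fun b => β * ξ b)
    simp only [List.map_ofFn, Function.comp_def] at hk
    rw [hvec, hk, hsm]
  · rw [hvec, blockAct 1 U (fun b => α * ξ b) (fun b => β * ξ b), Matrix.one_mulVec, hsm]
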